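/- Let $p : X \to Y$ be a quandle covering, $y \in Y$, and $I_y$ a finite subset of $p^{-1}(y)$ with coefficients $\alpha_{x'} \in \mathbf{k}$ satisfying $\sum_{x' \in I_y} \alpha_{x'} = 1$. Then for any $w \in \mathbf{k}[X]$ and any fixed $x_0 \in p^{-1}(y)$: $w \cdot \left(\sum_{x' \in I_y} \alpha_{x'} e_{x'}\right) = w \cdot e_{x_0}$. In particular, $v = \sum_{x' \in I_y} \alpha_{x'} e_{x'}$ is an idempotent of $\mathbf{k}[X]$. -/

import Mathlib

/-- A quandle with the paper's (right-multiplication) convention: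
`x * y = S_y(x)`, each `S_y` is an automorphism of the quandle fixing `y`. -/
class Quandle' (Q : Type*) extends Mul Q where
  invMul : Q → Q → Q
  rightDist : ∀ x y z : Q, (x * y) * z = (x * z) * (y * z)
  invMul_mul : ∀ x y : Q, invMul (x * y) y = x
  mul_invMul : ∀ x y : Q, (invMul x y) * y = x
  mul_self : ∀ x : Q, x * x = x

private lemma stmt17_aux {Q : Type*} [Mul Q] {k : Type*} [CommRing k]
    (x' x0 : Q) (h : ∀ z : Q, z * x' = z * x0) (w : MonoidAlgebra k Q) :
    w * MonoidAlgebra.single x' (1 : k) = w * MonoidAlgebra.single x0 (1 : k) := by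
  induction w using MonoidAlgebra.induction with
  | zero => simp
  | single_add a b f _ _ ih =>
    rw [add_mul, add_mul, ih]
    congr 1
    rw [MonoidAlgebra.single_mul_single, MonoidAlgebra.single_mul_single, h]

/-- For a quandle covering, a combination `v = ∑ α_{x'} e_{x'}` over a fibre with
`∑ α_{x'} = 1` satisfies `w·v = w·e_{x₀}` for every `w` and every `x₀` in the fibre;
in particular `v` is an idempotent. -/
theorem stmt17 {Q R : Type*} [Quandle' Q] [Quandle' R] (p : Q → R)
    (hom : ∀ a b : Q, p (a * b) = p a * p b) (surj : Function.Surjective p)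
    (cov : ∀ x x' : Q, p x = p x' → ∀ z : Q, z * x = z * x')
    (k : Type*) [CommRing k] [IsDomain k]
    (y : R) (I : Finset Q) (hI : ∀ x ∈ I, p x = y)
    (α : Q → k) (hsum : ∑ x ∈ I, α x = 1) :
    (∀ (w : MonoidAlgebra k Q) (x0 : Q), p x0 = y →
      w * (∑ x ∈ I, α x • (MonoidAlgebra.single x (1 : k) : MonoidAlgebra k Q)) =
        w * MonoidAlgebra.single x0 (1 : k)) ∧
    (∑ x ∈ I, α x • (MonoidAlgebra.single x (1 : k) : MonoidAlgebra k Q)) *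
        (∑ x ∈ I, α x • (MonoidAlgebra.single x (1 : k) : MonoidAlgebra k Q)) =
      ∑ x ∈ I, α x • (MonoidAlgebra.single x (1 : k) : MonoidAlgebra k Q) := by
  have main : ∀ (w : MonoidAlgebra k Q) (x0 : Q), p x0 = y →
      w * (∑ x ∈ I, α x • (MonoidAlgebra.single x (1 : k) : MonoidAlgebra k Q)) =
        w * MonoidAlgebra.single x0 (1 : k) := by
    intro w x0 hx0
    rw [Finset.mul_sum]
    calc ∑ x ∈ I, w * α x • (MonoidAlgebra.single x (1 : k) : MonoidAlgebra k Q)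
        = ∑ x ∈ I, α x • (w * MonoidAlgebra.single x0 (1 : k)) := by
          refine Finset.sum_congr rfl fun x hx => ?_
          rw [mul_smul_comm, stmt17_aux x x0 (cov x x0 ((hI x hx).trans hx0.symm)) w]
      _ = (∑ x ∈ I, α x) • (w * MonoidAlgebra.single x0 (1 : k)) := by
          rw [Finset.sum_smul]
      _ = w * MonoidAlgebra.single x0 (1 : k) := by rw [hsum, one_smul]
  refine ⟨main, ?_⟩
  obtain ⟨x0, hx0I⟩ : I.Nonempty := by
    by_contra h
    rw [Finset.not_nonempty_iff_eq_empty.mp h, Finset.sum_empty] at hsum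
    exact zero_ne_one hsum
  rw [main _ x0 (hI x0 hx0I), Finset.sum_mul]
  refine Finset.sum_congr rfl fun x hx => ?_
  rw [smul_mul_assoc, MonoidAlgebra.single_mul_single,
    cov x0 x ((hI x0 hx0I).trans (hI x hx).symm) x, Quandle'.mul_self, mul_one]
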